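/- arXiv:2311.07800 — 2 statements merged into one kernel-verified Lean document; each statement's English description precedes it below -/
import Mathlib

section
/- Let a < b, ρ ∈ (0,1), and let H : [a,b] → [0,∞) be strictly convex, strictly increasing and continuously differentiable, with H(a) > 0 and H'(a) < ρ. Suppose there exist y_tan ∈ (a,b) with H'(y_tan) = H(y_tan)/(y_tan − a), and z_ρ ∈ (a,b) with H'(z_ρ) = ρ, satisfying y_tan < z_ρ < b. Define v(u) = H'(y_tan)·(u−a) for a ≤ u ≤ y_tan, v(u) = H(u) for y_tan ≤ u ≤ z_ρ, and v(u) = ρ·(u − z_ρ) + H(z_ρ) for z_ρ ≤ u ≤ b. Then v is admissible, and v is the unique minimizer of K_{a,b} over all admissible functions. -/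
open MeasureTheory

/-- `h_ρ(z) = z log(z/ρ) + (1-z) log((1-z)/(1-ρ))` (with `0 log 0 = 0`,
which holds automatically since `Real.log 0 = 0`). -/
noncomputable def hRho (ρ z : ℝ) : ℝ :=
  z * Real.log (z / ρ) + (1 - z) * Real.log ((1 - z) / (1 - ρ))

/-- `v` is admissible on `[a,b]` with obstacle `H`: differentiable on `[a,b]`,
`v a = 0`, `0 ≤ v' ≤ 1` on `[a,b]`, and `v ≤ H` on `[a,b]`. -/
def Admissible (a b : ℝ) (H v : ℝ → ℝ) : Prop :=
  DifferentiableOn ℝ v (Set.Icc a b) ∧ v a = 0 ∧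
    (∀ u ∈ Set.Icc a b, derivWithin v (Set.Icc a b) u ∈ Set.Icc (0 : ℝ) 1) ∧
    ∀ u ∈ Set.Icc a b, v u ≤ H u

/-- The cost `K_{a,b}(v) = ∫_a^b h_ρ(v'(u)) du`. -/
noncomputable def cost (ρ a b : ℝ) (v : ℝ → ℝ) : ℝ :=
  ∫ u in a..b, hRho ρ (derivWithin v (Set.Icc a b) u)

open Set

/-- derivative of `hRho ρ`. -/
noncomputable def lf (ρ z : ℝ) : ℝ :=
  Real.log z - Real.log (1 - z) + (Real.log (1 - ρ) - Real.log ρ)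

lemma lf_rho (ρ : ℝ) : lf ρ ρ = 0 := by unfold lf; ring

lemma lf_strictMonoOn (ρ : ℝ) : StrictMonoOn (lf ρ) (Ioo (0:ℝ) 1) := by
  intro x hx y hy hxy
  have h1 : Real.log x < Real.log y := Real.log_lt_log hx.1 hxy
  have h2 : Real.log (1 - y) < Real.log (1 - x) :=
    Real.log_lt_log (by linarith [hy.2]) (by linarith)
  unfold lf; linarith

lemma lf_mono (ρ : ℝ) {x y : ℝ} (hx : 0 < x) (hxy : x ≤ y) (hy : y < 1) : lf ρ x ≤ lf ρ y := by
  rcases eq_or_lt_of_le hxy with rfl | h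
  · exact le_rfl
  · exact (lf_strictMonoOn ρ ⟨hx, lt_of_le_of_lt hxy hy⟩ ⟨lt_trans hx h, hy⟩ h).le

lemma hRho_eq (ρ : ℝ) (hρ : ρ ≠ 0) (hρ' : (1:ℝ) - ρ ≠ 0) :
    hRho ρ = fun z => z * Real.log z + (1 - z) * Real.log (1 - z) +
      ((Real.log (1 - ρ) - Real.log ρ) * z - Real.log (1 - ρ)) := by
  funext z
  have e1 : z * Real.log (z / ρ) = z * Real.log z - z * Real.log ρ := by
    rcases eq_or_ne z 0 with rfl | h
    · simp
    · rw [Real.log_div h hρ]; ring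
  have e2 : (1 - z) * Real.log ((1 - z) / (1 - ρ)) =
      (1 - z) * Real.log (1 - z) - (1 - z) * Real.log (1 - ρ) := by
    rcases eq_or_ne (1 - z) 0 with h | h
    · rw [h]; simp
    · rw [Real.log_div h hρ']; ring
  unfold hRho; rw [e1, e2]; ring

lemma continuous_hRho (ρ : ℝ) (hρ : ρ ≠ 0) (hρ' : (1:ℝ) - ρ ≠ 0) : Continuous (hRho ρ) := by
  rw [hRho_eq ρ hρ hρ']
  have h1 : Continuous fun z : ℝ => z * Real.log z := Real.continuous_mul_log
  have h2 : Continuous fun z : ℝ => (1 - z) * Real.log (1 - z) :=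
    Real.continuous_mul_log.comp (continuous_const.sub continuous_id)
  fun_prop

lemma hasDerivAt_hRho (ρ : ℝ) (hρ : ρ ≠ 0) (hρ' : (1:ℝ) - ρ ≠ 0) {z : ℝ}
    (h0 : 0 < z) (h1 : z < 1) : HasDerivAt (hRho ρ) (lf ρ z) z := by
  rw [hRho_eq ρ hρ hρ']
  have d1 : HasDerivAt (fun z : ℝ => z * Real.log z) (Real.log z + 1) z :=
    Real.hasDerivAt_mul_log h0.ne'
  have d2 : HasDerivAt (fun z : ℝ => (1 - z) * Real.log (1 - z))
      (-(Real.log (1 - z) + 1)) z := by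
    have hin : HasDerivAt (fun z : ℝ => 1 - z) (-1) z := (hasDerivAt_id z).const_sub 1
    have := (Real.hasDerivAt_mul_log (x := 1 - z) (by linarith)).comp z hin
    exact this.congr_deriv (by ring)
  have d3 : HasDerivAt (fun z : ℝ => (Real.log (1 - ρ) - Real.log ρ) * z - Real.log (1 - ρ))
      (Real.log (1 - ρ) - Real.log ρ) z := by
    simpa using ((hasDerivAt_id z).const_mul (Real.log (1 - ρ) - Real.log ρ)).sub_const
      (Real.log (1 - ρ))
  exact ((d1.add d2).add d3).congr_deriv (by unfold lf; ring)

lemma strictConvexOn_hRho (ρ : ℝ) (hρ0 : 0 < ρ) (hρ1 : ρ < 1) :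
    StrictConvexOn ℝ (Icc (0:ℝ) 1) (hRho ρ) := by
  have hρ : ρ ≠ 0 := hρ0.ne'
  have hρ' : (1:ℝ) - ρ ≠ 0 := by linarith
  apply StrictMonoOn.strictConvexOn_of_deriv (convex_Icc 0 1)
    (continuous_hRho ρ hρ hρ').continuousOn
  rw [interior_Icc]
  intro x hx y hy hxy
  rw [(hasDerivAt_hRho ρ hρ hρ' hx.1 hx.2).deriv, (hasDerivAt_hRho ρ hρ hρ' hy.1 hy.2).deriv]
  exact lf_strictMonoOn ρ hx hy hxy

lemma hRho_support_lt (ρ : ℝ) (hρ0 : 0 < ρ) (hρ1 : ρ < 1) {y z : ℝ}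
    (hy : y ∈ Ioo (0:ℝ) 1) (hz : z ∈ Icc (0:ℝ) 1) (hne : z ≠ y) :
    hRho ρ y + lf ρ y * (z - y) < hRho ρ z := by
  have hρ : ρ ≠ 0 := hρ0.ne'
  have hρ' : (1:ℝ) - ρ ≠ 0 := by linarith
  have hymem : y ∈ Icc (0:ℝ) 1 := ⟨hy.1.le, hy.2.le⟩
  have hd := hasDerivAt_hRho ρ hρ hρ' hy.1 hy.2
  rcases hne.lt_or_gt with h | h
  · have := (strictConvexOn_hRho ρ hρ0 hρ1).slope_lt_of_hasDerivAt hz hymem h hd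
    rw [slope_def_field] at this
    have hyz : 0 < y - z := by linarith
    rw [div_lt_iff₀ hyz] at this
    nlinarith
  · have := (strictConvexOn_hRho ρ hρ0 hρ1).lt_slope_of_hasDerivAt hymem hz h hd
    rw [slope_def_field] at this
    have hyz : 0 < z - y := by linarith
    rw [lt_div_iff₀ hyz] at this
    nlinarith

lemma hRho_support_le (ρ : ℝ) (hρ0 : 0 < ρ) (hρ1 : ρ < 1) {y z : ℝ}
    (hy : y ∈ Ioo (0:ℝ) 1) (hz : z ∈ Icc (0:ℝ) 1) :
    hRho ρ y + lf ρ y * (z - y) ≤ hRho ρ z := by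
  rcases eq_or_ne z y with rfl | hne
  · simp
  · exact (hRho_support_lt ρ hρ0 hρ1 hy hz hne).le

theorem stmt5 (a b ρ ytan zρ : ℝ) (H : ℝ → ℝ) (hab : a < b) (hρ0 : 0 < ρ) (hρ1 : ρ < 1)
    (hH0 : ∀ u ∈ Set.Icc a b, 0 ≤ H u)
    (hHconv : StrictConvexOn ℝ (Set.Icc a b) H)
    (hHmono : StrictMonoOn H (Set.Icc a b))
    (hHC1 : ContDiffOn ℝ 1 H (Set.Icc a b))
    (hHa : 0 < H a)
    (hHa' : derivWithin H (Set.Icc a b) a < ρ)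
    (hy : ytan ∈ Set.Ioo a b)
    (hy' : derivWithin H (Set.Icc a b) ytan = H ytan / (ytan - a))
    (hz : zρ ∈ Set.Ioo a b)
    (hz' : derivWithin H (Set.Icc a b) zρ = ρ)
    (hyz : ytan < zρ) :
    Admissible a b H
      (fun u => if u ≤ ytan then derivWithin H (Set.Icc a b) ytan * (u - a)
        else if u ≤ zρ then H u else ρ * (u - zρ) + H zρ) ∧
    ∀ w : ℝ → ℝ, Admissible a b H w →
      (∃ u ∈ Set.Icc a b, w u ≠ (if u ≤ ytan then derivWithin H (Set.Icc a b) ytan * (u - a)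
        else if u ≤ zρ then H u else ρ * (u - zρ) + H zρ)) →
      cost ρ a b
        (fun u => if u ≤ ytan then derivWithin H (Set.Icc a b) ytan * (u - a)
          else if u ≤ zρ then H u else ρ * (u - zρ) + H zρ) < cost ρ a b w := by
  classical
  have hρ : ρ ≠ 0 := hρ0.ne'
  have hρ' : (1:ℝ) - ρ ≠ 0 := by linarith
  have hUD : UniqueDiffOn ℝ (Set.Icc a b) := uniqueDiffOn_Icc hab
  set c := derivWithin H (Set.Icc a b) ytan with hc
  set v : ℝ → ℝ := fun u => if u ≤ ytan then c * (u - a)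
      else if u ≤ zρ then H u else ρ * (u - zρ) + H zρ with hv
  have hmemy : ytan ∈ Set.Icc a b := ⟨hy.1.le, hy.2.le⟩
  have hmemz : zρ ∈ Set.Icc a b := ⟨hz.1.le, hz.2.le⟩
  have hmema : a ∈ Set.Icc a b := Set.left_mem_Icc.2 hab.le
  have hmemb : b ∈ Set.Icc a b := Set.right_mem_Icc.2 hab.le
  have hHdiff : DifferentiableOn ℝ H (Set.Icc a b) := hHC1.differentiableOn one_ne_zero
  have hDcont : ContinuousOn (fun u => derivWithin H (Set.Icc a b) u) (Set.Icc a b) :=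
    hHC1.continuousOn_derivWithin hUD le_rfl
  have hDmono : StrictMonoOn (fun u => derivWithin H (Set.Icc a b) u) (Set.Icc a b) :=
    hHconv.strictMonoOn_derivWithin hHdiff
  have hDmono' : MonotoneOn (fun u => derivWithin H (Set.Icc a b) u) (Set.Icc a b) :=
    hDmono.monotoneOn
  have hcρ : c < ρ := by
    rw [hc, ← hz']; exact hDmono hmemy hmemz hyz
  have hya : (0:ℝ) < ytan - a := by linarith [hy.1]
  have hHy : 0 < H ytan := lt_trans hHa (hHmono hmema hmemy hy.1)
  have hc0 : 0 < c := by rw [hy']; exact div_pos hHy hya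
  have hc1 : c < 1 := lt_trans hcρ hρ1
  have hvya : c * (ytan - a) = H ytan := by
    rw [hy']; field_simp
  -- the clamped continuous version of the derivative of `v`
  set Vc : ℝ → ℝ := fun u => max c (min ρ (derivWithin H (Set.Icc a b) (max a (min b u))))
    with hVc
  have hclampmem : ∀ u : ℝ, max a (min b u) ∈ Set.Icc a b :=
    fun u => ⟨le_max_left _ _, max_le hab.le (min_le_left _ _)⟩
  have hclampeq : ∀ u ∈ Set.Icc a b, max a (min b u) = u := by
    intro u hu
    rw [min_eq_right hu.2, max_eq_right hu.1]
  have hVcCont : Continuous Vc := by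
    have h1 : Continuous fun u : ℝ => max a (min b u) :=
      continuous_const.max (continuous_const.min continuous_id)
    exact continuous_const.max (continuous_const.min
      (hDcont.comp_continuous h1 hclampmem))
  have hVcmem : ∀ u : ℝ, Vc u ∈ Set.Icc c ρ :=
    fun u => ⟨le_max_left _ _, max_le hcρ.le (min_le_left _ _)⟩
  have hVc01 : ∀ u : ℝ, Vc u ∈ Set.Icc (0:ℝ) 1 :=
    fun u => ⟨hc0.le.trans (hVcmem u).1, (hVcmem u).2.trans hρ1.le⟩
  have hVcIoo : ∀ u : ℝ, Vc u ∈ Set.Ioo (0:ℝ) 1 :=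
    fun u => ⟨lt_of_lt_of_le hc0 (hVcmem u).1, lt_of_le_of_lt (hVcmem u).2 hρ1⟩
  have hVc1 : ∀ u ∈ Set.Icc a b, u ≤ ytan → Vc u = c := by
    intro u hu h
    have hle : derivWithin H (Set.Icc a b) u ≤ c := hDmono' hu hmemy h
    show max c (min ρ (derivWithin H (Set.Icc a b) (max a (min b u)))) = _
    rw [hclampeq u hu, min_eq_right (hle.trans hcρ.le), max_eq_left hle]
  have hVc2 : ∀ u ∈ Set.Icc a b, ytan ≤ u → u ≤ zρ →
      Vc u = derivWithin H (Set.Icc a b) u := by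
    intro u hu h1 h2
    have hge : c ≤ derivWithin H (Set.Icc a b) u := hDmono' hmemy hu h1
    have hle : derivWithin H (Set.Icc a b) u ≤ ρ := by
      rw [← hz']; exact hDmono' hu hmemz h2
    show max c (min ρ (derivWithin H (Set.Icc a b) (max a (min b u)))) = _
    rw [hclampeq u hu, min_eq_right hle, max_eq_right hge]
  have hVc3 : ∀ u ∈ Set.Icc a b, zρ ≤ u → Vc u = ρ := by
    intro u hu h
    have hge : ρ ≤ derivWithin H (Set.Icc a b) u := by
      rw [← hz']; exact hDmono' hmemz hu h
    show max c (min ρ (derivWithin H (Set.Icc a b) (max a (min b u)))) = _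
    rw [hclampeq u hu, min_eq_left hge, max_eq_right hcρ.le]
  -- pointwise description of `v`
  have hvy : v ytan = H ytan := by
    rw [hv]; simp only [le_refl, if_true]; exact hvya
  have veq1 : ∀ u, u ≤ ytan → v u = c * (u - a) := by
    intro u h; rw [hv]; simp [h]
  have veq2 : ∀ u ∈ Set.Icc ytan zρ, v u = H u := by
    intro u hu
    by_cases h : u ≤ ytan
    · have : u = ytan := le_antisymm h hu.1
      rw [this, hvy]
    · rw [hv]; simp [h, hu.2]
  have veq3 : ∀ u, zρ ≤ u → v u = ρ * (u - zρ) + H zρ := by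
    intro u h
    by_cases h1 : u ≤ ytan
    · exact absurd (h.trans h1) (not_le.2 hyz)
    · by_cases h2 : u ≤ zρ
      · have huz : u = zρ := le_antisymm h2 h
        subst huz
        rw [hv]; simp [not_le.2 hyz]
      · rw [hv]; simp [h1, h2]
  -- the derivative of v
  have hl1 : ∀ x : ℝ, HasDerivAt (fun u => c * (u - a)) c x := by
    intro x
    simpa using ((hasDerivAt_id x).sub_const a).const_mul c
  have hl3 : ∀ x : ℝ, HasDerivAt (fun u => ρ * (u - zρ) + H zρ) ρ x := by
    intro x
    simpa using (((hasDerivAt_id x).sub_const zρ).const_mul ρ).add_const (H zρ)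
  have hasDerivV : ∀ u ∈ Set.Icc a b, HasDerivWithinAt v (Vc u) (Set.Icc a b) u := by
    intro u hu
    rcases lt_trichotomy u ytan with h1 | h1 | h1
    · rw [hVc1 u hu h1.le]
      refine (hl1 u).hasDerivWithinAt.congr_of_eventuallyEq ?_ (veq1 u h1.le)
      filter_upwards [(eventually_lt_nhds h1).filter_mono nhdsWithin_le_nhds] with x hx
      exact veq1 x hx.le
    · subst h1
      rw [hVc1 u hu le_rfl]
      have hleft : HasDerivWithinAt v c (Set.Icc a u) u :=
        (hl1 u).hasDerivWithinAt.congr (fun x hx => veq1 x hx.2) (veq1 u le_rfl)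
      have hH : HasDerivWithinAt H c (Set.Icc a b) u := by
        rw [hc]; exact (hHdiff u hu).hasDerivWithinAt
      have hmid : HasDerivWithinAt v c (Set.Icc u zρ) u :=
        ((hH.mono (Set.Icc_subset_Icc hu.1 hmemz.2)).congr
          (fun x hx => veq2 x hx) (veq2 u ⟨le_rfl, hyz.le⟩))
      have hright : HasDerivWithinAt v c (Set.Icc u b) u :=
        hmid.mono_of_mem_nhdsWithin (nhdsWithin_mono u (Set.Icc_subset_Ici_self)
          (Icc_mem_nhdsGE hyz))
      have := hleft.union hright
      rwa [Set.Icc_union_Icc_eq_Icc hu.1 hu.2] at this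
    · rcases lt_trichotomy u zρ with h2 | h2 | h2
      · rw [hVc2 u hu h1.le h2.le]
        refine ((hHdiff u hu).hasDerivWithinAt).congr_of_eventuallyEq ?_
          (veq2 u ⟨h1.le, h2.le⟩)
        filter_upwards [(eventually_gt_nhds h1).filter_mono nhdsWithin_le_nhds,
          (eventually_lt_nhds h2).filter_mono nhdsWithin_le_nhds] with x hx1 hx2
        exact veq2 x ⟨hx1.le, hx2.le⟩
      · subst h2
        rw [hVc3 u hu le_rfl]
        have hH : HasDerivWithinAt H ρ (Set.Icc a b) u := by
          rw [← hz']; exact (hHdiff u hu).hasDerivWithinAt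
        have hmid : HasDerivWithinAt v ρ (Set.Icc ytan u) u :=
          ((hH.mono (Set.Icc_subset_Icc hmemy.1 hu.2)).congr
            (fun x hx => veq2 x hx) (veq2 u ⟨hyz.le, le_rfl⟩))
        have hleft : HasDerivWithinAt v ρ (Set.Icc a u) u :=
          hmid.mono_of_mem_nhdsWithin (nhdsWithin_mono u (Set.Icc_subset_Iic_self)
            (Icc_mem_nhdsLE hyz))
        have hright : HasDerivWithinAt v ρ (Set.Icc u b) u :=
          (hl3 u).hasDerivWithinAt.congr (fun x hx => veq3 x hx.1) (veq3 u le_rfl)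
        have := hleft.union hright
        rwa [Set.Icc_union_Icc_eq_Icc hu.1 hu.2] at this
      · rw [hVc3 u hu h2.le]
        refine (hl3 u).hasDerivWithinAt.congr_of_eventuallyEq ?_ (veq3 u h2.le)
        filter_upwards [(eventually_gt_nhds h2).filter_mono nhdsWithin_le_nhds] with x hx
        exact veq3 x hx.le
  have hderivV : ∀ u ∈ Set.Icc a b, derivWithin v (Set.Icc a b) u = Vc u :=
    fun u hu => (hasDerivV u hu).derivWithin (hUD u hu)
  -- v ≤ H
  have hvH : ∀ u ∈ Set.Icc a b, v u ≤ H u := by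
    intro u hu
    by_cases h1 : u ≤ ytan
    · rw [veq1 u h1]
      rcases eq_or_lt_of_le h1 with rfl | h1'
      · rw [hvya]
      · have hs := hHconv.convexOn.slope_le_derivWithin hu hmemy h1' (hHdiff ytan hmemy)
        rw [slope_def_field, ← hc] at hs
        have h2 : (0:ℝ) < ytan - u := by linarith
        rw [div_le_iff₀ h2] at hs
        nlinarith
    · by_cases h2 : u ≤ zρ
      · rw [veq2 u ⟨(not_le.1 h1).le, h2⟩]
      · rw [veq3 u (not_le.1 h2).le]
        have hs := hHconv.convexOn.derivWithin_le_slope hmemz hu (not_le.1 h2)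
          (hHdiff zρ hmemz)
        rw [slope_def_field, hz'] at hs
        have h3 : (0:ℝ) < u - zρ := by linarith [not_le.1 h2]
        rw [le_div_iff₀ h3] at hs
        linarith
  have hva : v a = 0 := by rw [veq1 a (hy.1.le)]; ring
  have hAdm : Admissible a b H v := by
    refine ⟨fun u hu => (hasDerivV u hu).differentiableWithinAt, hva, ?_, hvH⟩
    intro u hu
    rw [hderivV u hu]
    exact hVc01 u
  refine ⟨hAdm, ?_⟩
  intro w hw hne
  have hwcont : ContinuousOn w (Set.Icc a b) := hw.1.continuousOn
  have hvcont : ContinuousOn v (Set.Icc a b) := hAdm.1.continuousOn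
  -- measurable modification of the derivative of w
  set Wh : ℝ → ℝ := fun u => if u ∈ Set.Ioo a b then deriv w u else 0 with hWh
  have hWeq : ∀ u ∈ Set.Ioo a b, Wh u = derivWithin w (Set.Icc a b) u := by
    intro u hu
    rw [hWh]; simp only [hu, if_true]
    rw [derivWithin_of_mem_nhds (Icc_mem_nhds hu.1 hu.2)]
  have hW01 : ∀ u, Wh u ∈ Set.Icc (0:ℝ) 1 := by
    intro u
    by_cases h : u ∈ Set.Ioo a b
    · rw [hWh]; simp only [h, if_true]
      rw [← derivWithin_of_mem_nhds (Icc_mem_nhds h.1 h.2)]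
      exact hw.2.2.1 u ⟨h.1.le, h.2.le⟩
    · rw [hWh]; simp only [h, if_false]
      exact ⟨le_rfl, zero_le_one⟩
  have hWmeas : Measurable Wh :=
    Measurable.ite measurableSet_Ioo (measurable_deriv w) measurable_const
  set φ : ℝ → ℝ := fun u => Wh u - Vc u with hφ
  have hφmeas : Measurable φ := hWmeas.sub hVcCont.measurable
  have hφbd : ∀ u, |φ u| ≤ 1 := by
    intro u
    have h1 := hW01 u; have h2 := hVc01 u
    rw [hφ]; simp only []
    rw [abs_le]
    constructor
    · linarith [h1.1, h2.2]
    · linarith [h1.2, h2.1]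
  set Λ : ℝ → ℝ := fun u => lf ρ (Vc u) with hΛ
  have hlfcont : ContinuousOn (lf ρ) (Set.Icc c ρ) := by
    show ContinuousOn
      (fun z => Real.log z - Real.log (1 - z) + (Real.log (1 - ρ) - Real.log ρ)) (Set.Icc c ρ)
    have h1 : ContinuousOn Real.log (Set.Icc c ρ) :=
      Real.continuousOn_log.mono (fun z hz =>
        Set.mem_compl_singleton_iff.2 (ne_of_gt (lt_of_lt_of_le hc0 hz.1)))
    have h2 : ContinuousOn (fun z => Real.log (1 - z)) (Set.Icc c ρ) :=
      Real.continuousOn_log.comp ((continuous_const.sub continuous_id).continuousOn)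
        (fun z hz => Set.mem_compl_singleton_iff.2
          (ne_of_gt (by linarith [hz.2] : (0:ℝ) < 1 - z)))
    exact (h1.sub h2).add continuousOn_const
  have hΛcont : Continuous Λ := hlfcont.comp_continuous hVcCont hVcmem
  have hlfc0 : lf ρ c < 0 := by
    have := lf_strictMonoOn ρ ⟨hc0, hc1⟩ ⟨hρ0, hρ1⟩ hcρ
    rwa [lf_rho] at this
  have hΛrange : ∀ u, lf ρ c ≤ Λ u ∧ Λ u ≤ 0 := by
    intro u
    have h := hVcmem u
    constructor
    · exact lf_mono ρ hc0 h.1 (lt_of_le_of_lt h.2 hρ1)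
    · have := lf_mono ρ (lt_of_lt_of_le hc0 h.1) h.2 hρ1
      rwa [lf_rho] at this
  set D₀ : ℝ → ℝ := fun u => hRho ρ (Wh u) - hRho ρ (Vc u) - Λ u * φ u with hD₀
  have hD₀nonneg : ∀ u, 0 ≤ D₀ u := by
    intro u
    have := hRho_support_le ρ hρ0 hρ1 (hVcIoo u) (hW01 u)
    rw [hD₀, hΛ, hφ]; simp only []
    linarith
  have hD₀pos : ∀ u, Wh u ≠ Vc u → 0 < D₀ u := by
    intro u hne'
    have := hRho_support_lt ρ hρ0 hρ1 (hVcIoo u) (hW01 u) hne'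
    rw [hD₀, hΛ, hφ]; simp only []
    linarith
  have hRVmeas : Measurable (fun u => hRho ρ (Vc u)) :=
    ((continuous_hRho ρ hρ hρ').comp hVcCont).measurable
  have hRWmeas : Measurable (fun u => hRho ρ (Wh u)) :=
    (continuous_hRho ρ hρ hρ').measurable.comp hWmeas
  have hD₀meas : Measurable D₀ := (hRWmeas.sub hRVmeas).sub (hΛcont.measurable.mul hφmeas)
  obtain ⟨M, hM⟩ : ∃ M, ∀ z ∈ Set.Icc (0:ℝ) 1, ‖hRho ρ z‖ ≤ M :=
    isCompact_Icc.exists_bound_of_continuousOn (continuous_hRho ρ hρ hρ').continuousOn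
  have hRWbd : ∀ u, |hRho ρ (Wh u)| ≤ M := fun u => by
    simpa [Real.norm_eq_abs] using hM (Wh u) (hW01 u)
  have hRVbd : ∀ u, |hRho ρ (Vc u)| ≤ M := fun u => by
    simpa [Real.norm_eq_abs] using hM (Vc u) (hVc01 u)
  have hΛφbd : ∀ u, |Λ u * φ u| ≤ -(lf ρ c) := by
    intro u
    rw [abs_mul]
    have h1 : |Λ u| ≤ -(lf ρ c) := by
      rw [abs_le]; constructor
      · linarith [(hΛrange u).1]
      · linarith [(hΛrange u).2, hlfc0]
    calc |Λ u| * |φ u| ≤ -(lf ρ c) * 1 :=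
          mul_le_mul h1 (hφbd u) (abs_nonneg _) (by linarith)
      _ = -(lf ρ c) := mul_one _
  have hD₀bd : ∀ u, |D₀ u| ≤ M + M + -(lf ρ c) := by
    intro u
    have h1 := hRWbd u; have h2 := hRVbd u; have h3 := hΛφbd u
    rw [hD₀]; simp only []
    rw [abs_le] at h1 h2 h3 ⊢
    constructor
    · linarith [h1.1, h2.2, h3.2]
    · linarith [h1.2, h2.1, h3.1]
  -- integrability helper
  have hinteg : ∀ (f : ℝ → ℝ) (C : ℝ), Measurable f → (∀ u, |f u| ≤ C) →
      ∀ x y : ℝ, MeasureTheory.IntegrableOn f (Set.Ioc x y) := by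
    intro f C hf hC x y
    refine MeasureTheory.Integrable.mono' (g := fun _ => C)
      (MeasureTheory.integrableOn_const measure_Ioc_lt_top.ne)
      hf.aestronglyMeasurable
      (Filter.Eventually.of_forall fun u => by simpa [Real.norm_eq_abs] using hC u)
  -- fundamental theorem of calculus for w - v
  have hFTC : ∀ x y, a ≤ x → x ≤ y → y ≤ b →
      ∫ u in Set.Ioc x y, φ u = (w y - v y) - (w x - v x) := by
    intro x y hax hxy hyb
    rw [← intervalIntegral.integral_of_le hxy]
    apply intervalIntegral.integral_eq_sub_of_hasDeriv_right_of_le hxy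
      ((hwcont.sub hvcont).mono (Set.Icc_subset_Icc hax hyb))
    · intro t ht
      have htab : t ∈ Set.Ioo a b := ⟨lt_of_le_of_lt hax ht.1, lt_of_lt_of_le ht.2 hyb⟩
      have hwd : HasDerivAt w (Wh t) t := by
        rw [hWh]; simp only [htab, if_true]
        exact (hw.1.differentiableAt (Icc_mem_nhds htab.1 htab.2)).hasDerivAt
      have hvd : HasDerivAt v (Vc t) t :=
        (hasDerivV t ⟨htab.1.le, htab.2.le⟩).hasDerivAt (Icc_mem_nhds htab.1 htab.2)
      exact ((hwd.sub hvd).hasDerivWithinAt)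
    · exact ⟨hinteg φ 1 hφmeas hφbd x y, hinteg φ 1 hφmeas hφbd y x⟩
  -- cost identities
  have hcostw : cost ρ a b w = ∫ u in Set.Ioc a b, hRho ρ (Wh u) := by
    rw [cost, intervalIntegral.integral_of_le hab.le,
      MeasureTheory.integral_Ioc_eq_integral_Ioo, MeasureTheory.integral_Ioc_eq_integral_Ioo]
    exact (MeasureTheory.setIntegral_congr_fun measurableSet_Ioo
      (fun u hu => by rw [hWeq u hu])).symm
  have hcostv : cost ρ a b v = ∫ u in Set.Ioc a b, hRho ρ (Vc u) := by
    rw [cost, intervalIntegral.integral_of_le hab.le,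
      MeasureTheory.integral_Ioc_eq_integral_Ioo, MeasureTheory.integral_Ioc_eq_integral_Ioo]
    exact MeasureTheory.setIntegral_congr_fun measurableSet_Ioo
      (fun u hu => by rw [hderivV u ⟨hu.1.le, hu.2.le⟩])
  have hsub : cost ρ a b w - cost ρ a b v
      = (∫ u in Set.Ioc a b, D₀ u) + ∫ u in Set.Ioc a b, Λ u * φ u := by
    rw [hcostw, hcostv,
      ← MeasureTheory.integral_sub (hinteg _ M hRWmeas hRWbd a b) (hinteg _ M hRVmeas hRVbd a b),
      ← MeasureTheory.integral_add (hinteg _ _ hD₀meas hD₀bd a b)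
        (hinteg (fun u => Λ u * φ u) _ (hΛcont.measurable.mul hφmeas) hΛφbd a b)]
    congr 1
    funext u
    rw [hD₀]; ring
  -- splitting the multiplier integral
  have hII : ∀ x y : ℝ, IntervalIntegrable (fun u => Λ u * φ u) MeasureTheory.volume x y :=
    fun x y => ⟨hinteg _ _ (hΛcont.measurable.mul hφmeas) hΛφbd x y,
      hinteg _ _ (hΛcont.measurable.mul hφmeas) hΛφbd y x⟩
  have hsplit : ∫ u in Set.Ioc a b, Λ u * φ u
      = ((∫ u in Set.Ioc a ytan, Λ u * φ u) + ∫ u in Set.Ioc ytan zρ, Λ u * φ u)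
        + ∫ u in Set.Ioc zρ b, Λ u * φ u := by
    have e1 := intervalIntegral.integral_add_adjacent_intervals (hII a ytan) (hII ytan zρ)
    have e2 := intervalIntegral.integral_add_adjacent_intervals (hII a zρ) (hII zρ b)
    rw [← intervalIntegral.integral_of_le hab.le, ← intervalIntegral.integral_of_le hy.1.le,
      ← intervalIntegral.integral_of_le hyz.le, ← intervalIntegral.integral_of_le hz.2.le]
    linarith [e1, e2]
  have hT3 : ∫ u in Set.Ioc zρ b, Λ u * φ u = 0 := by
    rw [MeasureTheory.setIntegral_congr_fun measurableSet_Ioc (g := fun _ => (0:ℝ)) ?_,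
      MeasureTheory.integral_zero]
    intro u hu
    have hum : u ∈ Set.Icc a b := ⟨(hz.1.trans hu.1).le, hu.2⟩
    rw [hΛ]; simp only []
    rw [hVc3 u hum hu.1.le, lf_rho, zero_mul]
  have hT1 : ∫ u in Set.Ioc a ytan, Λ u * φ u = lf ρ c * (w ytan - v ytan) := by
    have hcongr : ∀ u ∈ Set.Ioc a ytan, Λ u * φ u = lf ρ c * φ u := by
      intro u hu
      have hum : u ∈ Set.Icc a b := ⟨hu.1.le, hu.2.trans hy.2.le⟩
      rw [hΛ]; simp only []
      rw [hVc1 u hum hu.2]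
    rw [MeasureTheory.setIntegral_congr_fun measurableSet_Ioc hcongr,
      MeasureTheory.integral_const_mul, hFTC a ytan le_rfl hy.1.le hy.2.le, hva, hw.2.1]
    ring
  -- the Stieltjes function
  have hclamp2mem : ∀ u : ℝ, max ytan (min zρ u) ∈ Set.Icc ytan zρ :=
    fun u => ⟨le_max_left _ _, max_le hyz.le (min_le_left _ _)⟩
  have hsubIcc : Set.Icc ytan zρ ⊆ Set.Icc a b := Set.Icc_subset_Icc hy.1.le hz.2.le
  have hDmemIcc : ∀ x ∈ Set.Icc ytan zρ, derivWithin H (Set.Icc a b) x ∈ Set.Icc c ρ := by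
    intro x hx
    exact ⟨hDmono' hmemy (hsubIcc hx) hx.1,
      by rw [← hz']; exact hDmono' (hsubIcc hx) hmemz hx.2⟩
  have hGcont : Continuous (fun u => lf ρ (derivWithin H (Set.Icc a b) (max ytan (min zρ u)))) := by
    have h1 : Continuous fun u : ℝ => max ytan (min zρ u) :=
      continuous_const.max (continuous_const.min continuous_id)
    have h2 : Continuous fun u : ℝ => derivWithin H (Set.Icc a b) (max ytan (min zρ u)) :=
      hDcont.comp_continuous h1 (fun u => hsubIcc (hclamp2mem u))
    exact hlfcont.comp_continuous h2 (fun u => hDmemIcc _ (hclamp2mem u))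
  set G : StieltjesFunction ℝ :=
    { toFun := fun u => lf ρ (derivWithin H (Set.Icc a b) (max ytan (min zρ u)))
      mono' := by
        intro x y hxy
        have h1 : max ytan (min zρ x) ≤ max ytan (min zρ y) :=
          max_le_max le_rfl (min_le_min le_rfl hxy)
        have h2 := hDmono' (hsubIcc (hclamp2mem x)) (hsubIcc (hclamp2mem y)) h1
        exact lf_mono ρ (lt_of_lt_of_le hc0 (hDmemIcc _ (hclamp2mem x)).1) h2
          (lt_of_le_of_lt (hDmemIcc _ (hclamp2mem y)).2 hρ1)
      right_continuous' := fun x => hGcont.continuousWithinAt } with hG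
  have hGy : G ytan = lf ρ c := by
    show lf ρ (derivWithin H (Set.Icc a b) (max ytan (min zρ ytan))) = _
    rw [min_eq_right hyz.le, max_self, hc]
  have hGz : G zρ = 0 := by
    show lf ρ (derivWithin H (Set.Icc a b) (max ytan (min zρ zρ))) = 0
    rw [min_self, max_eq_right hyz.le, hz', lf_rho]
  have hGeq : ∀ u ∈ Set.Ioc ytan zρ, G u = Λ u := by
    intro u hu
    have hum : u ∈ Set.Icc a b := hsubIcc ⟨hu.1.le, hu.2⟩
    show lf ρ (derivWithin H (Set.Icc a b) (max ytan (min zρ u))) = _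
    rw [min_eq_right hu.2, max_eq_right hu.1.le, hΛ]
    simp only []
    rw [hVc2 u hum hu.1.le hu.2]
  have hGle : ∀ u, u ≤ zρ → G u ≤ 0 := fun u hu => (G.mono hu).trans (le_of_eq hGz)
  -- Fubini
  haveI hfin1 : MeasureTheory.IsFiniteMeasure
      (MeasureTheory.volume.restrict (Set.Ioc ytan zρ)) :=
    ⟨by rw [MeasureTheory.Measure.restrict_apply_univ]; exact measure_Ioc_lt_top⟩
  haveI hfin2 : MeasureTheory.IsFiniteMeasure (G.measure.restrict (Set.Ioc ytan zρ)) :=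
    ⟨by rw [MeasureTheory.Measure.restrict_apply_univ, G.measure_Ioc]
        exact ENNReal.ofReal_lt_top⟩
  have hFmeas : Measurable (fun p : ℝ × ℝ => if p.1 < p.2 then φ p.1 else 0) :=
    Measurable.ite (measurableSet_lt measurable_fst measurable_snd)
      (hφmeas.comp measurable_fst) measurable_const
  have hFint : MeasureTheory.Integrable (fun p : ℝ × ℝ => if p.1 < p.2 then φ p.1 else 0)
      ((MeasureTheory.volume.restrict (Set.Ioc ytan zρ)).prod
        (G.measure.restrict (Set.Ioc ytan zρ))) := by
    refine MeasureTheory.Integrable.mono' (g := fun _ => 1)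
      (MeasureTheory.integrable_const 1) hFmeas.aestronglyMeasurable
      (Filter.Eventually.of_forall fun p => ?_)
    by_cases h : p.1 < p.2
    · simp only [h, if_true]
      simpa [Real.norm_eq_abs] using hφbd p.1
    · simp [h]
  have hswap := MeasureTheory.integral_integral_swap
    (f := fun u s => if u < s then φ u else 0) hFint
  have hLHS : (∫ u, (∫ s, (if u < s then φ u else 0)
          ∂(G.measure.restrict (Set.Ioc ytan zρ)))
        ∂(MeasureTheory.volume.restrict (Set.Ioc ytan zρ)))
      = ∫ u in Set.Ioc ytan zρ, (-(G u)) * φ u := by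
    apply MeasureTheory.setIntegral_congr_fun measurableSet_Ioc
    intro u hu
    show (∫ s, (if u < s then φ u else 0) ∂(G.measure.restrict (Set.Ioc ytan zρ)))
      = -(G u) * φ u
    have e1 : (fun s => if u < s then φ u else 0)
        = fun s => Set.indicator (Set.Ioi u) (fun _ => φ u) s := by
      funext s; rw [Set.indicator_apply]
      simp [Set.mem_Ioi]
    rw [e1, MeasureTheory.integral_indicator measurableSet_Ioi,
      MeasureTheory.setIntegral_const, MeasureTheory.measureReal_def,
      MeasureTheory.Measure.restrict_apply measurableSet_Ioi]
    have e2 : Set.Ioi u ∩ Set.Ioc ytan zρ = Set.Ioc u zρ := by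
      ext x
      simp only [Set.mem_inter_iff, Set.mem_Ioi, Set.mem_Ioc]
      constructor
      · rintro ⟨h1, _, h3⟩; exact ⟨h1, h3⟩
      · rintro ⟨h1, h2⟩; exact ⟨h1, lt_trans hu.1 h1, h2⟩
    rw [e2, G.measure_Ioc, hGz, ENNReal.toReal_ofReal (by linarith [hGle u hu.2]), smul_eq_mul]
    ring
  have hRHS : (∫ s, (∫ u, (if u < s then φ u else 0)
          ∂(MeasureTheory.volume.restrict (Set.Ioc ytan zρ)))
        ∂(G.measure.restrict (Set.Ioc ytan zρ)))
      = ∫ s in Set.Ioc ytan zρ, ((w s - v s) - (w ytan - v ytan)) ∂G.measure := by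
    apply MeasureTheory.setIntegral_congr_fun measurableSet_Ioc
    intro s hs
    show (∫ u, (if u < s then φ u else 0) ∂(MeasureTheory.volume.restrict (Set.Ioc ytan zρ)))
      = (w s - v s) - (w ytan - v ytan)
    have e1 : (fun u => if u < s then φ u else 0) = fun u => Set.indicator (Set.Iio s) φ u := by
      funext u; rw [Set.indicator_apply]
      simp [Set.mem_Iio]
    rw [e1, MeasureTheory.setIntegral_indicator measurableSet_Iio]
    have e2 : Set.Ioc ytan zρ ∩ Set.Iio s = Set.Ioo ytan s := by
      ext x
      simp only [Set.mem_inter_iff, Set.mem_Ioc, Set.mem_Iio, Set.mem_Ioo]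
      constructor
      · rintro ⟨⟨h1, _⟩, h3⟩; exact ⟨h1, h3⟩
      · rintro ⟨h1, h2⟩; exact ⟨⟨h1, le_trans h2.le hs.2⟩, h2⟩
    rw [e2, ← MeasureTheory.integral_Ioc_eq_integral_Ioo,
      hFTC ytan s hy.1.le hs.1.le (hs.2.trans hz.2.le)]
  have hT2 : ∫ u in Set.Ioc ytan zρ, Λ u * φ u
      = -(∫ s in Set.Ioc ytan zρ, ((w s - v s) - (w ytan - v ytan)) ∂G.measure) := by
    have hstep : ∫ u in Set.Ioc ytan zρ, Λ u * φ u
        = -∫ u in Set.Ioc ytan zρ, (-(G u)) * φ u := by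
      rw [← MeasureTheory.integral_neg]
      apply MeasureTheory.setIntegral_congr_fun measurableSet_Ioc
      intro u hu
      show Λ u * φ u = -(-(G u) * φ u)
      rw [← hGeq u hu]; ring
    rw [hstep, ← hLHS, hswap, hRHS]
  obtain ⟨Cψ, hCψ⟩ : ∃ C, ∀ s ∈ Set.Icc a b, ‖w s - v s‖ ≤ C :=
    isCompact_Icc.exists_bound_of_continuousOn (hwcont.sub hvcont)
  have hψint : MeasureTheory.Integrable (fun s => w s - v s)
      (G.measure.restrict (Set.Ioc ytan zρ)) := by
    refine MeasureTheory.Integrable.mono' (MeasureTheory.integrable_const Cψ)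
      (((hwcont.sub hvcont).mono (Set.Ioc_subset_Icc_self.trans hsubIcc)).aestronglyMeasurable measurableSet_Ioc) ?_
    filter_upwards [MeasureTheory.ae_restrict_mem measurableSet_Ioc] with s hs
    exact hCψ s (hsubIcc ⟨hs.1.le, hs.2⟩)
  have hT2' : ∫ u in Set.Ioc ytan zρ, Λ u * φ u
      = -(∫ s in Set.Ioc ytan zρ, (w s - v s) ∂G.measure)
        + (w ytan - v ytan) * (-(lf ρ c)) := by
    rw [hT2, MeasureTheory.integral_sub hψint (MeasureTheory.integrable_const _),
      MeasureTheory.setIntegral_const, MeasureTheory.measureReal_def, G.measure_Ioc, hGz, hGy,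
      ENNReal.toReal_ofReal (by linarith), smul_eq_mul]
    ring
  have hψnonpos : ∫ s in Set.Ioc ytan zρ, (w s - v s) ∂G.measure ≤ 0 := by
    apply MeasureTheory.integral_nonpos_of_ae
    filter_upwards [MeasureTheory.ae_restrict_mem measurableSet_Ioc] with s hs
    have h1 : v s = H s := veq2 s ⟨hs.1.le, hs.2⟩
    have h2 := hw.2.2.2 s (hsubIcc ⟨hs.1.le, hs.2⟩)
    simp only [Pi.zero_apply]
    linarith
  have hΛφnonneg : 0 ≤ ∫ u in Set.Ioc a b, Λ u * φ u := by
    rw [hsplit, hT1, hT3, hT2']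
    have := hψnonpos
    nlinarith [hψnonpos]
  -- strict positivity of the Bregman part
  have hD₀int : MeasureTheory.IntegrableOn D₀ (Set.Ioc a b) := hinteg _ _ hD₀meas hD₀bd a b
  have hsupport : 0 < (MeasureTheory.volume.restrict (Set.Ioc a b)) (Function.support D₀) := by
    rcases (show (0:ENNReal) ≤ (MeasureTheory.volume.restrict (Set.Ioc a b))
        (Function.support D₀) from zero_le).lt_or_eq with h | h
    · exact h
    · exfalso
      have h0 : (MeasureTheory.volume.restrict (Set.Ioc a b)) (Function.support D₀) = 0 := h.symm
      have hφ0 : ∀ x, a ≤ x → x ≤ b →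
          φ =ᵐ[MeasureTheory.volume.restrict (Set.Ioc a x)] 0 := by
        intro x hax hxb
        rw [Filter.EventuallyEq, MeasureTheory.ae_iff]
        rw [MeasureTheory.Measure.restrict_apply' measurableSet_Ioc]
        refine measure_mono_null (?_ :
          _ ⊆ (Function.support D₀ ∩ Set.Ioc a b) ∪ {b}) ?_
        · rintro u ⟨hu1, hu2⟩
          by_cases hub : u = b
          · exact Or.inr (by simp [hub])
          · refine Or.inl ⟨?_, hu2.1, le_trans hu2.2 hxb⟩
            have huoo : u ∈ Set.Ioo a b := ⟨hu2.1, lt_of_le_of_ne (le_trans hu2.2 hxb) hub⟩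
            have hne2 : Wh u ≠ Vc u := by
              intro hcontra
              apply hu1
              simp only [Pi.zero_apply]
              rw [hφ]; simp only []
              rw [hcontra]; ring
            exact Function.mem_support.2 (ne_of_gt (hD₀pos u hne2))
        · refine MeasureTheory.measure_union_null ?_ (MeasureTheory.measure_singleton b)
          rw [← MeasureTheory.Measure.restrict_apply' measurableSet_Ioc]
          exact h0
      have hwv : ∀ x ∈ Set.Icc a b, w x = v x := by
        intro x hx
        have h1 := hFTC a x le_rfl hx.1 hx.2
        rw [MeasureTheory.integral_eq_zero_of_ae (hφ0 x hx.1 hx.2)] at h1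
        have h2 : w a = 0 := hw.2.1
        linarith [h1]
      obtain ⟨u₀, hu₀, hne₀⟩ := hne
      exact hne₀ (hwv u₀ hu₀)
  have hD₀posint : 0 < ∫ u in Set.Ioc a b, D₀ u :=
    (MeasureTheory.integral_pos_iff_support_of_nonneg_ae
      (Filter.Eventually.of_forall hD₀nonneg) hD₀int).2 hsupport
  linarith [hsub, hΛφnonneg, hD₀posint]
end

section
/- Let γ > 0, t > 0 and u ∈ ℝ. Let v₀ : ℝ → ℝ be nondecreasing and 1-Lipschitz. Then the supremum over y ∈ ℝ of v₀(y) − t·G_γ((y−u)/t) is finite and is attained at some point y* ∈ [u − tγ, u + tγ]: there exists y* in this interval with v₀(y*) − t·G_γ((y*−u)/t) = sup_{y ∈ ℝ} {v₀(y) − t·G_γ((y−u)/t)}. -/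
/-- `G_γ(z)`: `(γ/4)(1+z/γ)²` for `|z| ≤ γ`, `0` for `z < -γ`, `z` for `z > γ`. -/
noncomputable def Gfun (γ z : ℝ) : ℝ :=
  if z < -γ then 0 else if γ < z then z else γ / 4 * (1 + z / γ) ^ 2

lemma Gfun_eq (γ : ℝ) (hγ : 0 < γ) (z : ℝ) :
    Gfun γ z = γ / 4 * (1 + (max (-γ) (min γ z)) / γ) ^ 2 + max 0 (z - γ) := by
  unfold Gfun
  rcases lt_or_ge z (-γ) with h | h
  · rw [if_pos h, min_eq_right (by linarith : z ≤ γ), max_eq_left h.le,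
      max_eq_left (by linarith : z - γ ≤ 0)]
    field_simp
    norm_num
  · rw [if_neg (not_lt.2 h)]
    rcases lt_or_ge γ z with h2 | h2
    · rw [if_pos h2, min_eq_left h2.le, max_eq_right (by linarith),
        max_eq_right (by linarith)]
      field_simp
      ring
    · rw [if_neg (not_lt.2 h2), min_eq_right h2, max_eq_right h,
        max_eq_left (by linarith)]
      ring

lemma Gfun_continuous (γ : ℝ) (hγ : 0 < γ) : Continuous (Gfun γ) := by
  have : Gfun γ = fun z => γ / 4 * (1 + (max (-γ) (min γ z)) / γ) ^ 2 + max 0 (z - γ) := by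
    funext z; exact Gfun_eq γ hγ z
  rw [this]
  fun_prop

/-- Hopf–Lax: for `v₀` nondecreasing and 1-Lipschitz, the supremum of
`y ↦ v₀(y) - t G_γ((y-u)/t)` is finite and attained at some `y* ∈ [u - tγ, u + tγ]`. -/
theorem stmt10 (γ t u : ℝ) (hγ : 0 < γ) (ht : 0 < t) (v₀ : ℝ → ℝ)
    (hmono : Monotone v₀) (hlip : LipschitzWith 1 v₀) :
    ∃ ystar ∈ Set.Icc (u - t * γ) (u + t * γ),
      IsGreatest (Set.range fun y => v₀ y - t * Gfun γ ((y - u) / t))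
        (v₀ ystar - t * Gfun γ ((ystar - u) / t)) := by
  set f : ℝ → ℝ := fun y => v₀ y - t * Gfun γ ((y - u) / t) with hf
  set a := u - t * γ
  set b := u + t * γ
  have hab : a ≤ b := by simp only [a, b]; nlinarith
  have hcont : Continuous f := by
    apply Continuous.sub hlip.continuous
    exact continuous_const.mul ((Gfun_continuous γ hγ).comp (by fun_prop))
  obtain ⟨ystar, hyI, hymax⟩ := isCompact_Icc.exists_isMaxOn (Set.nonempty_Icc.2 hab)
    hcont.continuousOn (f := f)
  -- values at endpoints
  have hGa : Gfun γ ((a - u) / t) = 0 := by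
    have : (a - u) / t = -γ := by field_simp [a]; ring
    rw [this]; unfold Gfun
    rw [if_neg (lt_irrefl _), if_neg (by intro h; linarith)]
    field_simp
    norm_num
  have hGb : Gfun γ ((b - u) / t) = γ := by
    have : (b - u) / t = γ := by field_simp [b]; simp only [b]; ring
    rw [this]; unfold Gfun
    rw [if_neg (by intro h; linarith), if_neg (lt_irrefl _), div_self hγ.ne']
    ring
  have key : ∀ y, f y ≤ f ystar := by
    intro y
    rcases lt_or_ge y a with h | h
    · -- y < a : Gfun = 0
      have hz : (y - u) / t < -γ := by
        rw [div_lt_iff₀ ht]; simp only [a] at h; nlinarith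
      have : f y = v₀ y := by
        simp only [hf]; unfold Gfun; rw [if_pos hz]; ring
      have hfa : f a = v₀ a := by simp only [hf, hGa]; ring
      calc f y = v₀ y := this
        _ ≤ v₀ a := hmono h.le
        _ = f a := hfa.symm
        _ ≤ f ystar := hymax (Set.left_mem_Icc.2 hab)
    rcases le_or_gt y b with h2 | h2
    · exact hymax ⟨h, h2⟩
    · -- y > b : Gfun = (y-u)/t
      have hz : γ < (y - u) / t := by
        rw [lt_div_iff₀ ht]; simp only [b] at h2; nlinarith
      have hfy : f y = v₀ y - (y - u) := by
        simp only [hf]; unfold Gfun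
        rw [if_neg (by intro hc; linarith), if_pos hz]
        field_simp
      have hfb : f b = v₀ b - t * γ := by simp only [hf, hGb]
      have hlipyb : v₀ y - v₀ b ≤ y - b := by
        have := hlip.dist_le_mul y b
        rw [NNReal.coe_one, one_mul, Real.dist_eq, Real.dist_eq] at this
        have h1 : v₀ y - v₀ b ≤ |v₀ y - v₀ b| := le_abs_self _
        have h2' : |y - b| = y - b := abs_of_pos (by linarith)
        linarith
      calc f y = v₀ y - (y - u) := hfy
        _ ≤ v₀ b - t * γ := by simp only [b] at *; linarith
        _ = f b := hfb.symm
        _ ≤ f ystar := hymax (Set.right_mem_Icc.2 hab)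
  exact ⟨ystar, hyI, ⟨⟨ystar, rfl⟩, by rintro x ⟨y, rfl⟩; exact key y⟩⟩
end
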